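/- The top coefficient of the difference operator L is identically 1: for every u ∈ ℂ, T^{N+1}(u) = 1; equivalently, the telescoping product identity x_{N+1}(u) · x_N(u+2) · x_{N−1}(u+4) ⋯ x_1(u+2N) = 1 holds for all u ∈ ℂ. -/

import Mathlib

open Complex

noncomputable def oneSubXD (x w : ℂ → ℂ) : ℂ → ℂ := fun u => w u - x u * w (u + 2)

noncomputable def Lop (x : ℕ → ℂ → ℂ) : ℕ → (ℂ → ℂ) → (ℂ → ℂ)
  | 0 => fun w => w
  | k + 1 => fun w => oneSubXD (x (k + 1)) (Lop x k w)

lemma tele_up (g : ℕ → ℂ) : ∀ m, (∀ a, a ≤ m → g a ≠ 0) →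
    ∏ j ∈ Finset.range m, g (j+1) / g j = g m / g 0
  | 0, hg => by simp [div_self (hg 0 le_rfl)]
  | m+1, hg => by
    rw [Finset.prod_range_succ, tele_up g m (fun a ha => hg a (ha.trans m.le_succ))]
    have h0 := hg 0 (Nat.zero_le _)
    have hm := hg m (Nat.le_succ _)
    field_simp

lemma tele_down (g : ℕ → ℂ) : ∀ m, (∀ a, a ≤ m → g a ≠ 0) →
    ∏ j ∈ Finset.range m, g j / g (j+1) = g 0 / g m
  | 0, hg => by simp [div_self (hg 0 le_rfl)]
  | m+1, hg => by
    rw [Finset.prod_range_succ, tele_down g m (fun a ha => hg a (ha.trans m.le_succ))]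
    have h0 := hg 0 (Nat.zero_le _)
    have hm := hg m (Nat.le_succ _)
    have hm1 := hg (m+1) le_rfl
    field_simp

lemma Ltop (x : ℕ → ℂ → ℂ) (w : ℂ → ℂ) :
    ∀ (k : ℕ) (u : ℂ), (∀ j, j < k → w (u + 2 * j) = 0) →
      Lop x k w u =
        (-1) ^ k * (∏ j ∈ Finset.range k, x (k - j) (u + 2 * j)) * w (u + 2 * k)
  | 0, u, _ => by simp [Lop]
  | k+1, u, hw => by
    have h1 : Lop x k w u = 0 := by
      rw [Ltop x w k u (fun j hj => hw j (hj.trans (Nat.lt_succ_self k))),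
        hw k (Nat.lt_succ_self k)]
      ring
    have h2 : Lop x k w (u+2) =
        (-1)^k * (∏ j ∈ Finset.range k, x (k - j) (u + 2 + 2*j)) * w (u + 2 + 2*k) := by
      apply Ltop
      intro j hj
      have : u + 2 + 2*(j:ℂ) = u + 2 * ((j+1 : ℕ) : ℂ) := by push_cast; ring
      rw [this]
      exact hw (j+1) (Nat.succ_lt_succ hj)
    show Lop x k w u - x (k+1) u * Lop x k w (u+2) = _
    rw [h1, h2, Finset.prod_range_succ']
    have e1 : (∏ j ∈ Finset.range k, x (k + 1 - (j+1)) (u + 2 * ((j+1:ℕ):ℂ)))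
        = ∏ j ∈ Finset.range k, x (k - j) (u + 2 + 2*(j:ℂ)) := by
      apply Finset.prod_congr rfl
      intro j _
      congr 1
      · omega
      · push_cast; ring
    rw [e1]
    have e2 : w (u + 2 + 2*(k:ℂ)) = w (u + 2 * ((k+1:ℕ):ℂ)) := by
      congr 1; push_cast; ring
    have e3 : u + 2*((0:ℕ):ℂ) = u := by push_cast; ring
    rw [e2, e3]
    simp only [Nat.sub_zero]
    generalize (∏ j ∈ Finset.range k, x (k - j) (u + 2 + 2*(j:ℂ))) = P
    ring

theorem top_coefficient_A2_even
    (n : ℕ) (hn : 1 ≤ n) (N : ℕ) (hN : N = 2 * n)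
    (hbar : ℂ) (hbar_ne : hbar ≠ 0) (s : ℂ)
    (hs : s = (Real.pi : ℂ) * Complex.I / (2 * hbar))
    (Q : ℕ → ℂ → ℂ) (hQ0 : ∀ u, Q 0 u = 1)
    (hQne : ∀ a, 1 ≤ a → a ≤ n → ∀ u, Q a u ≠ 0)
    (hconst : ℕ → ℂ)
    (hQper : ∀ a, 1 ≤ a → a ≤ n → hconst a ≠ 0 ∧
      ∀ u, Q a (u + (Real.pi : ℂ) * Complex.I / hbar) = hconst a * Q a u)
    (Y : ℕ → ℂ → ℂ) (hY : ∀ a u, Y a u = Q a (u - 1) / Q a (u + 1))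
    (x : ℕ → ℂ → ℂ)
    (hxa : ∀ a, 1 ≤ a → a ≤ n → ∀ u : ℂ,
      x a u = Y a (u + a) / Y (a - 1) (u + a + 1))
    (hx0 : ∀ u : ℂ, x (n + 1) u = Y n (u + n + 1 + s) / Y n (u + n + 2))
    (hxbar : ∀ a, 1 ≤ a → a ≤ n → ∀ u : ℂ,
      x (2 * n - a + 2) u = Y (a - 1) (u + 2 * (n : ℂ) - a + 2 + s)
        / Y a (u + 2 * (n : ℂ) - a + 3 + s))
    (T : ℤ → ℂ → ℂ)
    (hTneg : ∀ a : ℤ, a < 0 → ∀ u, T a u = 0)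
    (hTbig : ∀ a : ℤ, (N : ℤ) + 1 < a → ∀ u, T a u = 0)
    (hTL : ∀ w : ℂ → ℂ, ∀ u : ℂ, Lop x (N + 1) w u
      = ∑ a ∈ Finset.range (N + 2), (-1) ^ a * T a (u + a) * w (u + 2 * a))
    :
    (∀ u : ℂ, T ((N : ℤ) + 1) u = 1) ∧
    (∀ u : ℂ, ∏ k ∈ Finset.range (N + 1), x (N + 1 - k) (u + 2 * k) = 1) := by
  subst hN
  have hYne : ∀ a, a ≤ n → ∀ v, Y a v ≠ 0 := by
    intro a ha v
    rcases Nat.eq_zero_or_pos a with h0 | h1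
    · subst h0; rw [hY, hQ0, hQ0]; norm_num
    · rw [hY]; exact div_ne_zero (hQne a h1 ha _) (hQne a h1 ha _)
  have hY0 : ∀ v, Y 0 v = 1 := by intro v; rw [hY, hQ0, hQ0]; norm_num
  have hprod : ∀ u : ℂ, ∏ k ∈ Finset.range (2*n + 1), x (2*n + 1 - k) (u + 2 * k) = 1 := by
    intro u
    set f : ℕ → ℂ := fun j => x (j+1) (u + 2*((2*n - j : ℕ):ℂ)) with hf
    set g : ℕ → ℂ := fun a => Y a (u + 4*(n:ℂ) + 2 - a) with hgdef
    set h : ℕ → ℂ := fun b => Y b (u + 2*(n:ℂ) + 1 + b + s) with hhdef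
    have hgne : ∀ a, a ≤ n → g a ≠ 0 := fun a ha => hYne a ha _
    have hhne : ∀ a, a ≤ n → h a ≠ 0 := fun a ha => hYne a ha _
    have hrefl : ∏ k ∈ Finset.range (2*n+1), x (2*n+1-k) (u + 2*(k:ℂ))
        = ∏ j ∈ Finset.range (2*n+1), f j := by
      rw [← Finset.prod_range_reflect f (2*n+1)]
      apply Finset.prod_congr rfl
      intro k hk
      simp only [Finset.mem_range] at hk
      have h1 : 2*n + 1 - 1 - k = 2*n - k := by omega
      have h2 : 2*n - k + 1 = 2*n + 1 - k := by omega
      have h3 : 2*n - (2*n - k) = k := by omega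
      simp only [hf, h1, h2, h3]
    rw [hrefl, show 2*n+1 = (n+1) + n from by ring, Finset.prod_range_add,
      Finset.prod_range_succ]
    have hb1 : ∏ j ∈ Finset.range n, f j = g n / g 0 := by
      rw [← tele_up g n hgne]
      apply Finset.prod_congr rfl
      intro j hj
      simp only [Finset.mem_range] at hj
      have hc : ((2*n - j : ℕ) : ℂ) = 2*(n:ℂ) - j := by
        push_cast [Nat.cast_sub (by omega : j ≤ 2*n)]; ring
      simp only [hf, hgdef]
      rw [hxa (j+1) (by omega) (by omega)]
      simp only [Nat.add_sub_cancel]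
      have e1 : u + 2*((2*n - j:ℕ):ℂ) + ((j+1:ℕ):ℂ)
          = u + 4*(n:ℂ) + 2 - ((j+1:ℕ):ℂ) := by rw [hc]; push_cast; ring
      have e2 : u + 2*((2*n - j:ℕ):ℂ) + ((j+1:ℕ):ℂ) + 1
          = u + 4*(n:ℂ) + 2 - (j:ℂ) := by rw [hc]; push_cast; ring
      rw [e2, e1]
    have hbmid : f n = h n / g n := by
      simp only [hf, hgdef, hhdef]
      have h4 : 2*n - n = n := by omega
      rw [h4, hx0]
      have e1 : u + 2*((n:ℕ):ℂ) + (n:ℂ) + 1 + s = u + 2*(n:ℂ) + 1 + (n:ℂ) + s := by ring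
      have e2 : u + 2*((n:ℕ):ℂ) + (n:ℂ) + 2 = u + 4*(n:ℂ) + 2 - (n:ℂ) := by ring
      rw [e1, e2]
    have hb3 : ∏ i ∈ Finset.range n, f (n+1+i) = h 0 / h n := by
      have hG : ∏ i ∈ Finset.range n, (fun i => h i / h (i+1)) (n - 1 - i)
          = ∏ i ∈ Finset.range n, h i / h (i+1) :=
        Finset.prod_range_reflect (fun i => h i / h (i+1)) n
      rw [← tele_down h n hhne, ← hG]
      apply Finset.prod_congr rfl
      intro i hi
      simp only [Finset.mem_range] at hi
      have hidx : n + 1 + i + 1 = 2*n - (n - i) + 2 := by omega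
      simp only [hf]
      rw [hidx, hxbar (n-i) (by omega) (by omega)]
      have hd1 : n - i - 1 = n - 1 - i := by omega
      have hd2 : n - 1 - i + 1 = n - i := by omega
      rw [hd1]
      simp only [hhdef, hd2]
      have hc1 : ((2*n - (n+1+i) : ℕ) : ℂ) = (n:ℂ) - 1 - i := by
        push_cast [Nat.cast_sub (by omega : n+1+i ≤ 2*n)]; ring
      have hc2 : ((n - i : ℕ) : ℂ) = (n:ℂ) - i := by
        push_cast [Nat.cast_sub (by omega : i ≤ n)]; ring
      have hc3 : ((n - 1 - i : ℕ) : ℂ) = (n:ℂ) - 1 - i := by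
        push_cast [Nat.cast_sub (by omega : 1 + i ≤ n), Nat.sub_sub]; ring
      have hidx2 : 2*n - (n+1+i) = n - 1 - i := by omega
      rw [hidx2] at hc1
      have e1 : u + 2*(((n - 1 - i : ℕ)):ℂ) + 2*(n:ℂ) - ((n-i:ℕ):ℂ) + 2 + s
          = u + 2*(n:ℂ) + 1 + ((n-1-i : ℕ):ℂ) + s := by rw [hc2, hc3]; ring
      have e2 : u + 2*(((n - 1 - i : ℕ)):ℂ) + 2*(n:ℂ) - ((n-i:ℕ):ℂ) + 3 + s
          = u + 2*(n:ℂ) + 1 + ((n-i : ℕ):ℂ) + s := by rw [hc2, hc3]; ring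
      rw [hidx2, e1, e2]
    rw [hb1, hbmid, hb3]
    have hg0 : g 0 = 1 := by simp only [hgdef]; rw [hY0]
    have hh0 : h 0 = 1 := by simp only [hhdef]; rw [hY0]
    rw [hg0, hh0]
    field_simp
    exact div_self (mul_ne_zero (hgne n le_rfl) (hhne n le_rfl))
  refine ⟨?_, hprod⟩
  intro v
  set u := v - ((2*n+1 : ℕ):ℂ) with hu
  set w : ℂ → ℂ := fun z => if z = u + 2*((2*n+1:ℕ):ℂ) then 1 else 0 with hwdef
  have hw0 : ∀ j, j < 2*n+1 → w (u + 2*(j:ℂ)) = 0 := by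
    intro j hj
    simp only [hwdef]
    rw [if_neg]
    intro hcontra
    have h2 : (2:ℂ) * j = 2 * ((2*n+1:ℕ):ℂ) := add_left_cancel hcontra
    have h3 : (j:ℂ) = ((2*n+1:ℕ):ℂ) :=
      mul_left_cancel₀ two_ne_zero h2
    rw [Nat.cast_inj] at h3
    omega
  have hL := Ltop x w (2*n+1) u hw0
  rw [hTL w u] at hL
  have hw1 : w (u + 2*((2*n+1:ℕ):ℂ)) = 1 := by simp [hwdef]
  rw [hprod u, hw1] at hL
  rw [Finset.sum_eq_single_of_mem (2*n+1) (by simp [Finset.mem_range])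
    (fun b _ hb => by
      have : w (u + 2*(b:ℂ)) = 0 := by
        simp only [hwdef]
        rw [if_neg]
        intro hcontra
        have h2 : (2:ℂ) * b = 2 * ((2*n+1:ℕ):ℂ) := add_left_cancel hcontra
        have h3 : (b:ℂ) = ((2*n+1:ℕ):ℂ) := mul_left_cancel₀ two_ne_zero h2
        rw [Nat.cast_inj] at h3
        exact hb h3
      rw [this]; ring)] at hL
  rw [hw1] at hL
  have hne : ((-1:ℂ)) ^ (2*n+1) ≠ 0 := pow_ne_zero _ (by norm_num)
  have hT1 : T ((2*n+1 : ℕ) : ℤ) (u + ((2*n+1:ℕ):ℂ)) = 1 := by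
    have h4 := hL
    simp only [mul_one] at h4
    exact mul_left_cancel₀ hne (by rw [mul_one]; exact h4)
  have hcast : ((2*n+1 : ℕ) : ℤ) = ((2*n : ℕ) : ℤ) + 1 := by push_cast; ring
  have harg : u + ((2*n+1:ℕ):ℂ) = v := by rw [hu]; ring
  rw [hcast, harg] at hT1
  exact hT1
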